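/- Let n ≥ 2 and let x_1, …, x_n be pairwise distinct real numbers. For X_{n,i} = ∏_{j ≠ i} (x_i - x_j) and any integer k ≥ 1-n, the complete homogeneous symmetric polynomial of degree k satisfies ∑_{a ∈ A_{n,k}} x_1^{a_1} x_2^{a_2} ⋯ x_n^{a_n} = ∑_{i=1}^{n} x_i^{k+n-1} / X_{n,i}, where A_{n,k} is the set of n-tuples of nonnegative integers summing to k (and the left side is interpreted as 0 when k < 0, except the identity still holds for 1-n ≤ k ≤ -1 where the right side vanishes). -/

import Mathlib

open Finset

namespace Stmt8Aux

variable {N : ℕ} (x : Fin N → ℝ)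

/-- complete homogeneous symmetric function in the variables indexed by `s`. -/
def Hn (k : ℕ) (s : Finset (Fin N)) : ℝ := ∑ f ∈ s.piAntidiag k, ∏ i ∈ s, x i ^ f i

lemma Hn_zero (s : Finset (Fin N)) : Hn x 0 s = 1 := by
  simp [Hn]

lemma Hn_empty_succ (k : ℕ) : Hn x (k + 1) (∅ : Finset (Fin N)) = 0 := by
  simp [Hn]

lemma Hn_insert {i : Fin N} {s : Finset (Fin N)} (hi : i ∉ s) (k : ℕ) :
    Hn x k (insert i s) = ∑ p ∈ Finset.HasAntidiagonal.antidiagonal k, x i ^ p.1 * Hn x p.2 s := by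
  rw [Hn, ← Finset.cons_eq_insert _ _ hi, piAntidiag_cons hi, sum_disjiUnion]
  refine Finset.sum_congr rfl fun p hp => ?_
  rw [sum_map, Hn, mul_sum]
  refine Finset.sum_congr rfl fun g hg => ?_
  have hg' := mem_piAntidiag.mp hg
  have hgi : g i = 0 := by
    by_contra h
    exact hi (hg'.2 i h)
  rw [prod_cons]
  simp only [addRightEmbedding_apply]
  have h1 : (g + fun t => if t = i then p.1 else 0) i = p.1 := by simp [hgi]
  rw [h1]
  congr 1
  refine Finset.prod_congr rfl fun j hj => ?_
  have : j ≠ i := fun h => hi (h ▸ hj)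
  simp [this]

lemma Hn_succ_insert {i : Fin N} {s : Finset (Fin N)} (hi : i ∉ s) (k : ℕ) :
    Hn x (k + 1) (insert i s) = Hn x (k + 1) s + x i * Hn x k (insert i s) := by
  rw [Hn_insert x hi, Hn_insert x hi, Finset.Nat.antidiagonal_succ, sum_cons, sum_map, mul_sum]
  simp only [Function.Embedding.coeFn_mk, Function.Embedding.prodMap,
    Function.Embedding.refl_apply, pow_zero, one_mul]
  congr 1
  refine Finset.sum_congr rfl fun p hp => ?_
  simp [pow_succ]
  ring

lemma Hn_singleton (i : Fin N) (k : ℕ) : Hn x k {i} = x i ^ k := by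
  induction k with
  | zero => simp [Hn_zero]
  | succ k ih =>
    have : ({i} : Finset (Fin N)) = insert i ∅ := by simp
    rw [this, Hn_succ_insert x (Finset.notMem_empty i), Hn_empty_succ, ← this, ih, pow_succ]
    ring

/-- `Hn` extended by zero to negative integer degrees. -/
def HH (k : ℤ) (s : Finset (Fin N)) : ℝ := if 0 ≤ k then Hn x k.toNat s else 0

lemma HH_rec {i : Fin N} {s : Finset (Fin N)} (hi : i ∉ s) (k : ℤ) :
    HH x (k + 1) (insert i s) = HH x (k + 1) s + x i * HH x k (insert i s) := by
  by_cases h0 : 0 ≤ k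
  · have h1 : 0 ≤ k + 1 := by omega
    have h2 : (k + 1).toNat = k.toNat + 1 := by omega
    simp only [HH, if_pos h0, if_pos h1, h2]
    exact Hn_succ_insert x hi k.toNat
  · by_cases h1 : 0 ≤ k + 1
    · have hk : k = -1 := by omega
      subst hk
      simp [HH, Hn_zero]
    · simp [HH, h0, h1]


variable {x : Fin N → ℝ}

lemma prod_sub_ne_zero (hx : Function.Injective x) {i : Fin N} {t : Finset (Fin N)}
    (hi : i ∉ t) : ∏ j ∈ t, (x i - x j) ≠ 0 := by
  rw [Finset.prod_ne_zero_iff]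
  intro j hj
  exact sub_ne_zero.mpr (fun h => hi (hx h ▸ hj))

lemma key (hx : Function.Injective x) (n : ℕ) :
    ∀ (s : Finset (Fin N)), s.card = n + 1 → ∀ k : ℤ, -(n : ℤ) ≤ k →
      HH x k s = ∑ i ∈ s, x i ^ (k + n).toNat / ∏ j ∈ s.erase i, (x i - x j) := by
  induction n with
  | zero =>
    intro s hcard k hk
    obtain ⟨i, rfl⟩ := Finset.card_eq_one.mp hcard
    have h0 : (0 : ℤ) ≤ k := by omega
    simp [HH, h0, Hn_singleton]
  | succ n ih =>
    intro s hcard k hk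
    obtain ⟨i₀, h₀, i₁, h₁, hne01⟩ := Finset.one_lt_card.mp (by omega : 1 < s.card)
    set m : ℕ := (k + (n + 1 : ℕ)).toNat with hm
    have hd : x i₀ - x i₁ ≠ 0 := sub_ne_zero.mpr (fun h => hne01 (hx h))
    -- IH applications
    have hc0 : (s.erase i₀).card = n + 1 := by rw [Finset.card_erase_of_mem h₀]; omega
    have hc1 : (s.erase i₁).card = n + 1 := by rw [Finset.card_erase_of_mem h₁]; omega
    have hk1 : -(n : ℤ) ≤ k + 1 := by omega
    have hexp : (k + 1 + (n : ℕ)) = (k + (n + 1 : ℕ)) := by push_cast; ring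
    have IH0 := ih (s.erase i₀) hc0 (k + 1) hk1
    have IH1 := ih (s.erase i₁) hc1 (k + 1) hk1
    rw [hexp] at IH0 IH1
    -- recursion facts
    have e0 : HH x (k + 1) s = HH x (k + 1) (s.erase i₀) + x i₀ * HH x k s := by
      have := HH_rec x (Finset.notMem_erase i₀ s) k
      rwa [Finset.insert_erase h₀] at this
    have e1 : HH x (k + 1) s = HH x (k + 1) (s.erase i₁) + x i₁ * HH x k s := by
      have := HH_rec x (Finset.notMem_erase i₁ s) k
      rwa [Finset.insert_erase h₁] at this
    have hdiff : HH x (k + 1) (s.erase i₁) - HH x (k + 1) (s.erase i₀)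
        = (x i₀ - x i₁) * HH x k s := by linarith
    -- the partial fractions fact
    have fact2 :
        (∑ i ∈ s.erase i₁, x i ^ m / ∏ j ∈ (s.erase i₁).erase i, (x i - x j))
          - (∑ i ∈ s.erase i₀, x i ^ m / ∏ j ∈ (s.erase i₀).erase i, (x i - x j))
        = (x i₀ - x i₁) * ∑ i ∈ s, x i ^ m / ∏ j ∈ s.erase i, (x i - x j) := by
      have hmem10 : i₀ ∈ s.erase i₁ := Finset.mem_erase.mpr ⟨hne01, h₀⟩
      have hmem01 : i₁ ∈ s.erase i₀ := Finset.mem_erase.mpr ⟨hne01.symm, h₁⟩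
      set g : Fin N → ℝ := fun i => x i ^ m / ∏ j ∈ s.erase i, (x i - x j) with hg
      set g0 : Fin N → ℝ := fun i => x i ^ m / ∏ j ∈ (s.erase i₀).erase i, (x i - x j) with hg0
      set g1 : Fin N → ℝ := fun i => x i ^ m / ∏ j ∈ (s.erase i₁).erase i, (x i - x j) with hg1
      rw [← Finset.add_sum_erase _ g1 hmem10, ← Finset.add_sum_erase _ g0 hmem01,
          ← Finset.add_sum_erase _ g h₀, ← Finset.add_sum_erase _ g hmem01]
      have hu : (s.erase i₀).erase i₁ = (s.erase i₁).erase i₀ := Finset.erase_right_comm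
      rw [hu]
      -- endpoint i₀
      have end0 : g1 i₀ = (x i₀ - x i₁) * g i₀ := by
        have hfac : ∏ j ∈ s.erase i₀, (x i₀ - x j)
            = (x i₀ - x i₁) * ∏ j ∈ (s.erase i₀).erase i₁, (x i₀ - x j) :=
          (Finset.mul_prod_erase _ _ hmem01).symm
        have hP : ∏ j ∈ (s.erase i₀).erase i₁, (x i₀ - x j) ≠ 0 :=
          prod_sub_ne_zero hx (fun h => (Finset.mem_erase.mp (Finset.mem_erase.mp h).2).1 rfl)
        simp only [hg1, hg, ← hu, hfac]
        field_simp
      have end1 : g0 i₁ = -((x i₀ - x i₁) * g i₁) := by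
        have hfac : ∏ j ∈ s.erase i₁, (x i₁ - x j)
            = (x i₁ - x i₀) * ∏ j ∈ (s.erase i₁).erase i₀, (x i₁ - x j) :=
          (Finset.mul_prod_erase _ _ hmem10).symm
        have hP : ∏ j ∈ (s.erase i₁).erase i₀, (x i₁ - x j) ≠ 0 :=
          prod_sub_ne_zero hx (fun h => (Finset.mem_erase.mp (Finset.mem_erase.mp h).2).1 rfl)
        have hd' : x i₁ - x i₀ ≠ 0 := fun h => hd (by linarith [sub_eq_zero.mp h])
        simp only [hg0, hg, hu, hfac]
        field_simp
        ring
      -- middle terms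
      have mid : ∀ i ∈ (s.erase i₁).erase i₀, g1 i - g0 i = (x i₀ - x i₁) * g i := by
        intro i hi
        have hii0 : i ≠ i₀ := (Finset.mem_erase.mp hi).1
        have hii1 : i ≠ i₁ := (Finset.mem_erase.mp (Finset.mem_erase.mp hi).2).1
        have his : i ∈ s := (Finset.mem_erase.mp (Finset.mem_erase.mp hi).2).2
        set C : ℝ := ∏ j ∈ ((s.erase i).erase i₀).erase i₁, (x i - x j) with hC
        have hC0 : C ≠ 0 := prod_sub_ne_zero hx
          (fun h => (Finset.mem_erase.mp (Finset.mem_erase.mp (Finset.mem_erase.mp h).2).2).1 rfl)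
        have hv0 : x i - x i₀ ≠ 0 := sub_ne_zero.mpr (fun h => hii0 (hx h))
        have hv1 : x i - x i₁ ≠ 0 := sub_ne_zero.mpr (fun h => hii1 (hx h))
        have hm0 : i₀ ∈ s.erase i := Finset.mem_erase.mpr ⟨hii0.symm, h₀⟩
        have hm1 : i₁ ∈ (s.erase i).erase i₀ := Finset.mem_erase.mpr ⟨hne01.symm,
          Finset.mem_erase.mpr ⟨hii1.symm, h₁⟩⟩
        have hm0' : i₀ ∈ (s.erase i).erase i₁ := Finset.mem_erase.mpr ⟨hne01,
          Finset.mem_erase.mpr ⟨hii0.symm, h₀⟩⟩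
        have hfull : ∏ j ∈ s.erase i, (x i - x j) = (x i - x i₀) * ((x i - x i₁) * C) := by
          rw [← Finset.mul_prod_erase _ _ hm0, ← Finset.mul_prod_erase _ _ hm1, hC]
        have hden0 : ∏ j ∈ (s.erase i₀).erase i, (x i - x j) = (x i - x i₁) * C := by
          rw [Finset.erase_right_comm, ← Finset.mul_prod_erase _ _ hm1, ← hC]
        have hden1 : ∏ j ∈ (s.erase i₁).erase i, (x i - x j) = (x i - x i₀) * C := by
          rw [Finset.erase_right_comm (a := i₁) (b := i), ← Finset.mul_prod_erase _ _ hm0',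
            Finset.erase_right_comm (a := i₁) (b := i₀), ← hC]
        simp only [hg0, hg1, hg, hden0, hden1, hfull]
        field_simp
        ring
      have hsum : (∑ i ∈ (s.erase i₁).erase i₀, g1 i) - ∑ i ∈ (s.erase i₁).erase i₀, g0 i
          = (x i₀ - x i₁) * ∑ i ∈ (s.erase i₁).erase i₀, g i := by
        rw [← Finset.sum_sub_distrib, Finset.mul_sum]
        exact Finset.sum_congr rfl mid
      rw [end0, end1]
      linear_combination hsum
    -- final assembly
    have hmul : (x i₀ - x i₁) * HH x k s
        = (x i₀ - x i₁) * ∑ i ∈ s, x i ^ m / ∏ j ∈ s.erase i, (x i - x j) := by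
      rw [← hdiff, IH0, IH1, fact2]
    exact mul_left_cancel₀ hd hmul

end Stmt8Aux

/-- Partial-fractions identity for complete homogeneous symmetric polynomials: for
pairwise distinct `x₁,…,xₙ`, `X_{n,i} = ∏_{j≠i}(xᵢ - xⱼ)`, and any integer `k ≥ 1-n`,
`∑_{a ∈ A_{n,k}} x₁^{a₁}⋯xₙ^{aₙ} = ∑ᵢ xᵢ^{k+n-1} / X_{n,i}`, where the left side is `0`
when `k < 0`. -/
theorem stmt_8 (n : ℕ) (hn : 2 ≤ n) (x : Fin n → ℝ) (hx : Function.Injective x)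
    (k : ℤ) (hk : 1 - (n : ℤ) ≤ k) :
    (if 0 ≤ k then
        ∑ a ∈ Finset.Nat.antidiagonalTuple n k.toNat, ∏ i, x i ^ a i
      else 0) =
      ∑ i, x i ^ ((k + n - 1).toNat) / ∏ j ∈ Finset.univ.erase i, (x i - x j) := by
  have hn1 : 1 ≤ n := by omega
  have hcast : ((n - 1 : ℕ) : ℤ) = (n : ℤ) - 1 := by push_cast [Nat.cast_sub hn1]; ring
  have hcard : (Finset.univ : Finset (Fin n)).card = (n - 1) + 1 := by
    simp only [Finset.card_univ, Fintype.card_fin]; omega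
  have hk' : -((n - 1 : ℕ) : ℤ) ≤ k := by rw [hcast]; omega
  have H := Stmt8Aux.key hx (n - 1) Finset.univ hcard k hk'
  unfold Stmt8Aux.HH Stmt8Aux.Hn at H
  rw [Finset.piAntidiag_univ_fin_eq_antidiagonalTuple _ n, hcast,
    show k + ((n : ℤ) - 1) = k + n - 1 by ring] at H
  exact H
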